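/- Let (P^t)_{t≥0} be a measurable semigroup of Markov kernels on a measurable space (E,ℰ), let β > 0, and let V : E → [0,∞] be measurable with P^t V(x) < ∞ for all t ≥ 0 and x ∈ E, and R_β V(x) < ∞ for all x ∈ E. Then for every s ≥ 0 and x ∈ E with ∫₀^s P^u V(x) du < ∞, ∫₀^s β ( P^u(R_β V)(x) − P^u V(x) ) du = P^s(R_β V)(x) − R_β V(x). -/

import Mathlib

open MeasureTheory ProbabilityTheory
open scoped ENNReal

lemma auxJ (β : ℝ) (hβ : 0 < β) (m : ℝ) (hm : 0 ≤ m) :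
    ∫⁻ u in Set.Ioc (0:ℝ) m, ENNReal.ofReal (β * Real.exp (β * u))
      = ENNReal.ofReal (Real.exp (β * m) - 1) := by
  have hcont : Continuous fun u : ℝ => β * Real.exp (β * u) :=
    continuous_const.mul (Real.continuous_exp.comp (continuous_const.mul continuous_id))
  have hint : IntegrableOn (fun u : ℝ => β * Real.exp (β * u)) (Set.Ioc 0 m) :=
    hcont.integrableOn_Ioc
  rw [← ofReal_integral_eq_lintegral_ofReal hint
      (Filter.Eventually.of_forall fun u => by positivity)]
  congr 1
  have hder : ∀ u ∈ Set.uIcc (0:ℝ) m, HasDerivAt (fun u => Real.exp (β * u))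
      (β * Real.exp (β * u)) u := by
    intro u _
    simpa [mul_comm] using (((hasDerivAt_id u).const_mul β).exp)
  have := intervalIntegral.integral_eq_sub_of_hasDerivAt hder
    (hcont.intervalIntegrable 0 m)
  rw [← intervalIntegral.integral_of_le hm, this]
  simp

lemma auxTranslate (β : ℝ) (u : ℝ) (p : ℝ → ℝ≥0∞) (hp : Measurable p) :
    ∫⁻ t in Set.Ioi (0:ℝ), ENNReal.ofReal (β * Real.exp (-β * t)) * p (u + t)
      = ENNReal.ofReal (Real.exp (β * u)) *
        ∫⁻ r in Set.Ioi u, ENNReal.ofReal (β * Real.exp (-β * r)) * p r := by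
  have hc : Measurable fun r : ℝ => ENNReal.ofReal (β * Real.exp (-β * r)) :=
    ((Real.measurable_exp.comp (measurable_id.const_mul (-β))).const_mul β).ennreal_ofReal
  set H : ℝ → ℝ≥0∞ := fun r =>
    (Set.Ioi u).indicator (fun r => ENNReal.ofReal (β * Real.exp (-β * (r - u))) * p r) r with hH
  have hHm : Measurable H :=
    (((Real.measurable_exp.comp ((measurable_id.sub_const u).const_mul (-β))).const_mul
      β).ennreal_ofReal.mul hp).indicator measurableSet_Ioi
  have step1 : ∫⁻ t in Set.Ioi (0:ℝ), ENNReal.ofReal (β * Real.exp (-β * t)) * p (u + t)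
      = ∫⁻ t, H (t + u) := by
    rw [← lintegral_indicator measurableSet_Ioi]
    refine lintegral_congr fun t => ?_
    by_cases ht : 0 < t
    · have h1 : t ∈ Set.Ioi (0:ℝ) := ht
      have h2 : t + u ∈ Set.Ioi u := by simp [Set.mem_Ioi]; linarith
      rw [Set.indicator_of_mem h1, hH]
      simp only [Set.indicator_of_mem h2]
      have h3 : t + u - u = t := by ring
      rw [h3, add_comm u t]
    · have h1 : t ∉ Set.Ioi (0:ℝ) := ht
      have h2 : t + u ∉ Set.Ioi u := by simp [Set.mem_Ioi]; linarith [not_lt.mp ht]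
      rw [Set.indicator_of_notMem h1, hH]
      simp only [Set.indicator_of_notMem h2]
  have step2 : ∫⁻ t, H (t + u) = ∫⁻ r, H r :=
    (measurePreserving_add_right volume u).lintegral_comp hHm
  have step3 : ∫⁻ r, H r
      = ∫⁻ r in Set.Ioi u, ENNReal.ofReal (β * Real.exp (-β * (r - u))) * p r :=
    lintegral_indicator measurableSet_Ioi _
  have step4 : ∀ r : ℝ, ENNReal.ofReal (β * Real.exp (-β * (r - u)))
      = ENNReal.ofReal (Real.exp (β * u)) * ENNReal.ofReal (β * Real.exp (-β * r)) := by
    intro r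
    rw [← ENNReal.ofReal_mul (Real.exp_pos _).le]
    congr 1
    have h : -β * (r - u) = β * u + -β * r := by ring
    rw [h, Real.exp_add]; ring
  rw [step1, step2, step3]
  simp_rw [step4, mul_assoc]
  exact lintegral_const_mul _ (hc.mul hp)

lemma auxTonelli (β s : ℝ) (hβ : 0 < β) (hs : 0 ≤ s) (q : ℝ → ℝ≥0∞) (hq : Measurable q) :
    ∫⁻ u in Set.Ioc (0:ℝ) s, ENNReal.ofReal (β * Real.exp (β * u)) * ∫⁻ r in Set.Ioi u, q r
      = ∫⁻ r in Set.Ioi (0:ℝ), q r * ENNReal.ofReal (Real.exp (β * min s r) - 1) := by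
  set b : ℝ → ℝ≥0∞ := fun u => ENNReal.ofReal (β * Real.exp (β * u)) with hb_def
  have hb : Measurable b :=
    ((Real.measurable_exp.comp (measurable_id.const_mul β)).const_mul β).ennreal_ofReal
  have stepA : ∫⁻ u in Set.Ioc (0:ℝ) s, b u * ∫⁻ r in Set.Ioi u, q r
      = ∫⁻ u in Set.Ioc (0:ℝ) s, ∫⁻ r in Set.Ioi (0:ℝ), b u * (Set.Ioi u).indicator q r := by
    refine setLIntegral_congr_fun measurableSet_Ioc (fun u hu => ?_)
    rw [lintegral_const_mul' _ _ ENNReal.ofReal_ne_top, lintegral_indicator measurableSet_Ioi,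
      Measure.restrict_restrict measurableSet_Ioi,
      Set.inter_eq_left.mpr (Set.Ioi_subset_Ioi hu.1.le)]
  have hunc : (Function.uncurry fun u r => b u * (Set.Ioi u).indicator q r)
      = Set.indicator {z : ℝ × ℝ | z.1 < z.2} (fun z => b z.1 * q z.2) := by
    funext z
    by_cases hz : z.1 < z.2
    · simp [Function.uncurry, Set.indicator_of_mem, hz, Set.mem_Ioi]
    · simp [Function.uncurry, Set.indicator_of_notMem, hz, Set.mem_Ioi]
  have hFm : AEMeasurable (Function.uncurry fun u r => b u * (Set.Ioi u).indicator q r)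
      ((volume.restrict (Set.Ioc (0:ℝ) s)).prod (volume.restrict (Set.Ioi (0:ℝ)))) := by
    rw [hunc]
    exact (((hb.comp measurable_fst).mul (hq.comp measurable_snd)).indicator
      (measurableSet_lt measurable_fst measurable_snd)).aemeasurable
  have stepB : ∫⁻ u in Set.Ioc (0:ℝ) s, ∫⁻ r in Set.Ioi (0:ℝ), b u * (Set.Ioi u).indicator q r
      = ∫⁻ r in Set.Ioi (0:ℝ), ∫⁻ u in Set.Ioc (0:ℝ) s, b u * (Set.Ioi u).indicator q r :=
    lintegral_lintegral_swap hFm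
  have stepC : ∀ r ∈ Set.Ioi (0:ℝ),
      ∫⁻ u in Set.Ioc (0:ℝ) s, b u * (Set.Ioi u).indicator q r
        = q r * ENNReal.ofReal (Real.exp (β * min s r) - 1) := by
    intro r hr
    have h1 : ∀ u : ℝ, b u * (Set.Ioi u).indicator q r
        = (Set.Iio r).indicator (fun u => q r * b u) u := by
      intro u
      by_cases hu : u < r
      · rw [Set.indicator_of_mem (Set.mem_Ioi.mpr hu), Set.indicator_of_mem (Set.mem_Iio.mpr hu),
          mul_comm]
      · rw [Set.indicator_of_notMem (by simpa [Set.mem_Ioi] using hu),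
          Set.indicator_of_notMem (by simpa [Set.mem_Iio] using hu), mul_zero]
    simp_rw [h1]
    rw [lintegral_indicator measurableSet_Iio, Measure.restrict_restrict measurableSet_Iio,
      lintegral_const_mul _ hb]
    have hsets : ((Set.Iio r ∩ Set.Ioc 0 s : Set ℝ)) =ᵐ[volume] Set.Ioc (0:ℝ) (min s r) := by
      rw [ae_eq_set]
      constructor
      · refine measure_mono_null (show _ ⊆ ({r} : Set ℝ) from fun u hu => ?_)
          Real.volume_singleton
        exfalso
        obtain ⟨⟨h2, h3, h4⟩, h5⟩ := hu
        exact h5 ⟨h3, le_min h4 (Set.mem_Iio.mp h2).le⟩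
      · refine measure_mono_null (show _ ⊆ ({r} : Set ℝ) from fun u hu => ?_)
          Real.volume_singleton
        obtain ⟨⟨h3, h4⟩, h5⟩ := hu
        have h6 : ¬(u < r ∧ 0 < u ∧ u ≤ s) := fun hc => h5 ⟨hc.1, hc.2.1, hc.2.2⟩
        have h7 : u ≤ r := le_trans h4 (min_le_right s r)
        have h8 : u ≤ s := le_trans h4 (min_le_left s r)
        have : ¬ u < r := fun hc => h6 ⟨hc, h3, h8⟩
        exact le_antisymm h7 (not_lt.mp this)
    rw [setLIntegral_congr hsets, auxJ β hβ _ (le_min hs (Set.mem_Ioi.mp hr).le)]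
  calc ∫⁻ u in Set.Ioc (0:ℝ) s, b u * ∫⁻ r in Set.Ioi u, q r
      = ∫⁻ r in Set.Ioi (0:ℝ), ∫⁻ u in Set.Ioc (0:ℝ) s, b u * (Set.Ioi u).indicator q r := by
        rw [stepA, stepB]
    _ = ∫⁻ r in Set.Ioi (0:ℝ), q r * ENNReal.ofReal (Real.exp (β * min s r) - 1) :=
        setLIntegral_congr_fun measurableSet_Ioi stepC

/-- For a measurable Markov semigroup `(P^t)` and `β > 0`, with `P^t V(x) < ∞`,
`R_β V(x) < ∞`, and `∫₀^s P^u V(x) du < ∞`, one has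
`∫₀^s β (P^u(R_β V)(x) - P^u V(x)) du = P^s(R_β V)(x) - R_β V(x)`. -/
theorem resolvent_integral_identity
    {E : Type*} [MeasurableSpace E]
    (P : ℝ → Kernel E E)
    (hMarkov : ∀ t : ℝ, IsMarkovKernel (P t))
    (hP0 : ∀ x : E, P 0 x = MeasureTheory.Measure.dirac x)
    (hsemi : ∀ s t : ℝ, 0 ≤ s → 0 ≤ t → ∀ x : E, ∀ A : Set E, MeasurableSet A →
      P (t + s) x A = ∫⁻ y, P s y A ∂(P t x))
    (hmeas : ∀ f : E → ℝ≥0∞, Measurable f →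
      Measurable (fun p : ℝ × E => ∫⁻ y, f y ∂(P p.1 p.2)))
    (β : ℝ) (hβ : 0 < β)
    (V : E → ℝ≥0∞) (hV_meas : Measurable V)
    (PV : ℝ → E → ℝ≥0∞) (hPV_def : ∀ t : ℝ, ∀ x : E, PV t x = ∫⁻ y, V y ∂(P t x))
    (hPV_fin : ∀ t : ℝ, 0 ≤ t → ∀ x : E, PV t x < ⊤)
    (RV : E → ℝ≥0∞)
    (hRV_def : ∀ x : E,
      RV x = ∫⁻ t in Set.Ioi (0:ℝ), ENNReal.ofReal (β * Real.exp (-β * t)) * PV t x)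
    (hRV_fin : ∀ x : E, RV x < ⊤) :
    ∀ s : ℝ, 0 ≤ s → ∀ x : E,
      (∫⁻ u in Set.Ioc (0:ℝ) s, PV u x) ≠ ⊤ →
      (∫ u in (0:ℝ)..s, β * ((∫⁻ y, RV y ∂(P u x)).toReal - (PV u x).toReal))
        = (∫⁻ y, RV y ∂(P s x)).toReal - (RV x).toReal := by
  intro s hs x hfin
  -- measurability
  have hPVj : Measurable fun z : ℝ × E => PV z.1 z.2 := by
    have h := hmeas V hV_meas
    have h2 : (fun z : ℝ × E => PV z.1 z.2) = fun z : ℝ × E => ∫⁻ y, V y ∂(P z.1 z.2) :=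
      funext fun z => hPV_def z.1 z.2
    rw [h2]; exact h
  have hp : Measurable fun u : ℝ => PV u x := hPVj.comp (measurable_id.prodMk measurable_const)
  have hc : Measurable fun r : ℝ => ENNReal.ofReal (β * Real.exp (-β * r)) :=
    ((Real.measurable_exp.comp (measurable_id.const_mul (-β))).const_mul β).ennreal_ofReal
  have hq : Measurable fun r : ℝ => ENNReal.ofReal (β * Real.exp (-β * r)) * PV r x := hc.mul hp
  have hjm : Measurable fun z : E × ℝ => ENNReal.ofReal (β * Real.exp (-β * z.2)) * PV z.2 z.1 :=
    (hc.comp measurable_snd).mul (hPVj.comp (measurable_snd.prodMk measurable_fst))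
  have hRVm : Measurable RV := by
    have h2 := hjm.lintegral_prod_right' (ν := volume.restrict (Set.Ioi (0:ℝ)))
    have h3 : RV = fun x : E =>
        ∫⁻ t in Set.Ioi (0:ℝ), ENNReal.ofReal (β * Real.exp (-β * t)) * PV t x :=
      funext hRV_def
    rw [h3]; exact h2
  have hQm : Measurable fun u : ℝ => ∫⁻ y, RV y ∂(P u x) :=
    (hmeas RV hRVm).comp (measurable_id.prodMk measurable_const)
  -- semigroup property at the level of lintegrals
  have hbind : ∀ t u : ℝ, 0 ≤ t → 0 ≤ u → ∀ z : E, P (u + t) z = (P u z).bind (P t) := by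
    intro t u ht hu z
    ext A hA
    rw [Measure.bind_apply hA (P t).measurable.aemeasurable]
    exact hsemi t u ht hu z A hA
  have hsg : ∀ t u : ℝ, 0 ≤ t → 0 ≤ u → ∀ z : E,
      ∫⁻ y, PV t y ∂(P u z) = PV (u + t) z := by
    intro t u ht hu z
    rw [hPV_def (u + t) z, hbind t u ht hu z, Measure.lintegral_bind (P t).measurable.aemeasurable hV_meas.aemeasurable]
    exact lintegral_congr fun y => hPV_def t y
  -- P^u (R_β V)(x) in terms of the tail integrals
  have hQG : ∀ u : ℝ, 0 ≤ u → (∫⁻ y, RV y ∂(P u x)) = ENNReal.ofReal (Real.exp (β * u)) *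
      ∫⁻ r in Set.Ioi u, ENNReal.ofReal (β * Real.exp (-β * r)) * PV r x := by
    intro u hu
    haveI := hMarkov u
    have h1 : (∫⁻ y, RV y ∂(P u x)) = ∫⁻ y, (∫⁻ t in Set.Ioi (0:ℝ),
        ENNReal.ofReal (β * Real.exp (-β * t)) * PV t y) ∂(P u x) :=
      lintegral_congr fun y => hRV_def y
    have h2 : (∫⁻ y, (∫⁻ t in Set.Ioi (0:ℝ),
          ENNReal.ofReal (β * Real.exp (-β * t)) * PV t y) ∂(P u x))
        = ∫⁻ t in Set.Ioi (0:ℝ), ∫⁻ y,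
            ENNReal.ofReal (β * Real.exp (-β * t)) * PV t y ∂(P u x) :=
      lintegral_lintegral_swap hjm.aemeasurable
    have h3 : (∫⁻ t in Set.Ioi (0:ℝ), ∫⁻ y,
          ENNReal.ofReal (β * Real.exp (-β * t)) * PV t y ∂(P u x))
        = ∫⁻ t in Set.Ioi (0:ℝ), ENNReal.ofReal (β * Real.exp (-β * t)) * PV (u + t) x := by
      refine setLIntegral_congr_fun measurableSet_Ioi
        (fun t ht => ?_)
      have hpt : Measurable fun y : E => PV t y :=
        hPVj.comp (measurable_const.prodMk measurable_id)
      rw [lintegral_const_mul _ hpt, hsg t u (le_of_lt ht) hu x]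
    rw [h1, h2, h3]
    exact auxTranslate β u (fun r => PV r x) hp
  -- basic finiteness facts
  have hGle : ∀ u : ℝ, 0 ≤ u →
      (∫⁻ r in Set.Ioi u, ENNReal.ofReal (β * Real.exp (-β * r)) * PV r x) ≤ RV x := by
    intro u hu
    rw [hRV_def x]
    exact lintegral_mono_set (Set.Ioi_subset_Ioi hu)
  have hA_le : (∫⁻ r in Set.Ioc (0:ℝ) s, ENNReal.ofReal (β * Real.exp (-β * r)) * PV r x)
      ≤ RV x := by
    rw [hRV_def x]
    exact lintegral_mono_set Set.Ioc_subset_Ioi_self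
  have hA_ne : (∫⁻ r in Set.Ioc (0:ℝ) s, ENNReal.ofReal (β * Real.exp (-β * r)) * PV r x)
      ≠ ⊤ := (lt_of_le_of_lt hA_le (hRV_fin x)).ne
  have hGs_ne : (∫⁻ r in Set.Ioi s, ENNReal.ofReal (β * Real.exp (-β * r)) * PV r x)
      ≠ ⊤ := (lt_of_le_of_lt (hGle s hs) (hRV_fin x)).ne
  have hQle : ∀ u ∈ Set.Ioc (0:ℝ) s, (∫⁻ y, RV y ∂(P u x))
      ≤ ENNReal.ofReal (Real.exp (β * s)) * RV x := by
    intro u hu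
    rw [hQG u hu.1.le]
    exact mul_le_mul' (ENNReal.ofReal_le_ofReal (Real.exp_le_exp.mpr
      (mul_le_mul_of_nonneg_left hu.2 hβ.le))) (hGle u hu.1.le)
  have hQI_ne : (∫⁻ u in Set.Ioc (0:ℝ) s, ∫⁻ y, RV y ∂(P u x)) ≠ ⊤ := by
    have h1 : (∫⁻ u in Set.Ioc (0:ℝ) s, ∫⁻ y, RV y ∂(P u x))
        ≤ ENNReal.ofReal (Real.exp (β * s)) * RV x * volume (Set.Ioc (0:ℝ) s) := by
      calc (∫⁻ u in Set.Ioc (0:ℝ) s, ∫⁻ y, RV y ∂(P u x))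
          ≤ ∫⁻ _ in Set.Ioc (0:ℝ) s, ENNReal.ofReal (Real.exp (β * s)) * RV x :=
            setLIntegral_mono measurable_const hQle
        _ = ENNReal.ofReal (Real.exp (β * s)) * RV x * volume (Set.Ioc (0:ℝ) s) :=
            setLIntegral_const _ _
    refine (lt_of_le_of_lt h1 ?_).ne
    rw [Real.volume_Ioc]
    exact ENNReal.mul_lt_top (ENNReal.mul_lt_top ENNReal.ofReal_lt_top (hRV_fin x))
      ENNReal.ofReal_lt_top
  -- key ENNReal identity via Tonelli
  have hI1 : (∫⁻ u in Set.Ioc (0:ℝ) s, ENNReal.ofReal (β * Real.exp (β * u)) *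
        ∫⁻ r in Set.Ioi u, ENNReal.ofReal (β * Real.exp (-β * r)) * PV r x)
      = ENNReal.ofReal β * ∫⁻ u in Set.Ioc (0:ℝ) s, ∫⁻ y, RV y ∂(P u x) := by
    rw [setLIntegral_congr_fun measurableSet_Ioc (
      (fun u (hu : u ∈ Set.Ioc (0:ℝ) s) => show ENNReal.ofReal (β * Real.exp (β * u)) *
          (∫⁻ r in Set.Ioi u, ENNReal.ofReal (β * Real.exp (-β * r)) * PV r x)
          = ENNReal.ofReal β * ∫⁻ y, RV y ∂(P u x) by
        rw [hQG u hu.1.le, ← mul_assoc, ← ENNReal.ofReal_mul hβ.le]))]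
    exact lintegral_const_mul _ hQm
  have hsplitmin : (∫⁻ r in Set.Ioi (0:ℝ),
        (ENNReal.ofReal (β * Real.exp (-β * r)) * PV r x) *
          ENNReal.ofReal (Real.exp (β * min s r) - 1))
      = (∫⁻ r in Set.Ioc (0:ℝ) s, (ENNReal.ofReal (β * Real.exp (-β * r)) * PV r x) *
          ENNReal.ofReal (Real.exp (β * r) - 1))
        + ENNReal.ofReal (Real.exp (β * s) - 1) *
          ∫⁻ r in Set.Ioi s, ENNReal.ofReal (β * Real.exp (-β * r)) * PV r x := by
    rw [← Set.Ioc_union_Ioi_eq_Ioi hs, lintegral_union measurableSet_Ioi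
      (Set.Ioc_disjoint_Ioi le_rfl)]
    congr 1
    · refine setLIntegral_congr_fun measurableSet_Ioc
        (fun r hr => ?_)
      rw [min_eq_right hr.2]
    · rw [setLIntegral_congr_fun measurableSet_Ioi (
        (fun r (hr : r ∈ Set.Ioi s) => show (ENNReal.ofReal (β * Real.exp (-β * r)) * PV r x) *
            ENNReal.ofReal (Real.exp (β * min s r) - 1)
            = ENNReal.ofReal (Real.exp (β * s) - 1) *
              (ENNReal.ofReal (β * Real.exp (-β * r)) * PV r x) by
          rw [min_eq_left (le_of_lt hr), mul_comm]))]
      exact lintegral_const_mul' _ _ ENNReal.ofReal_ne_top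
  have hT1 : (∫⁻ r in Set.Ioc (0:ℝ) s, (ENNReal.ofReal (β * Real.exp (-β * r)) * PV r x) *
        ENNReal.ofReal (Real.exp (β * r) - 1))
        + (∫⁻ r in Set.Ioc (0:ℝ) s, ENNReal.ofReal (β * Real.exp (-β * r)) * PV r x)
      = ENNReal.ofReal β * ∫⁻ u in Set.Ioc (0:ℝ) s, PV u x := by
    rw [← lintegral_add_right _ hq]
    rw [setLIntegral_congr_fun measurableSet_Ioc (
      (fun r (hr : r ∈ Set.Ioc (0:ℝ) s) => show
        (ENNReal.ofReal (β * Real.exp (-β * r)) * PV r x) * ENNReal.ofReal (Real.exp (β * r) - 1)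
          + ENNReal.ofReal (β * Real.exp (-β * r)) * PV r x
          = ENNReal.ofReal β * PV r x by
      have hr0 : (0:ℝ) < r := hr.1
      have hone : (1:ℝ) ≤ Real.exp (β * r) := Real.one_le_exp (by positivity)
      have h1 : (ENNReal.ofReal (β * Real.exp (-β * r)) * PV r x) *
            ENNReal.ofReal (Real.exp (β * r) - 1)
            + ENNReal.ofReal (β * Real.exp (-β * r)) * PV r x
          = (ENNReal.ofReal (β * Real.exp (-β * r)) * ENNReal.ofReal (Real.exp (β * r) - 1)
            + ENNReal.ofReal (β * Real.exp (-β * r))) * PV r x := by ring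
      rw [h1]
      congr 1
      rw [← ENNReal.ofReal_mul (by positivity),
        ← ENNReal.ofReal_add (mul_nonneg (by positivity) (sub_nonneg.mpr hone)) (by positivity)]
      congr 1
      have hexp : Real.exp (-β * r) * Real.exp (β * r) = 1 := by
        rw [← Real.exp_add, show -β * r + β * r = 0 by ring, Real.exp_zero]
      linear_combination β * hexp))]
    exact lintegral_const_mul _ hp
  have key : ENNReal.ofReal β * (∫⁻ u in Set.Ioc (0:ℝ) s, ∫⁻ y, RV y ∂(P u x))
        + (∫⁻ r in Set.Ioc (0:ℝ) s, ENNReal.ofReal (β * Real.exp (-β * r)) * PV r x)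
      = ENNReal.ofReal β * (∫⁻ u in Set.Ioc (0:ℝ) s, PV u x)
        + ENNReal.ofReal (Real.exp (β * s) - 1) *
          ∫⁻ r in Set.Ioi s, ENNReal.ofReal (β * Real.exp (-β * r)) * PV r x := by
    rw [← hI1, auxTonelli β s hβ hs _ hq, hsplitmin, ← hT1]
    ring
  -- pass to real numbers
  have keyR : β * (∫⁻ u in Set.Ioc (0:ℝ) s, ∫⁻ y, RV y ∂(P u x)).toReal
        + (∫⁻ r in Set.Ioc (0:ℝ) s, ENNReal.ofReal (β * Real.exp (-β * r)) * PV r x).toReal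
      = β * (∫⁻ u in Set.Ioc (0:ℝ) s, PV u x).toReal
        + (Real.exp (β * s) - 1) *
          (∫⁻ r in Set.Ioi s, ENNReal.ofReal (β * Real.exp (-β * r)) * PV r x).toReal := by
    have h := congrArg ENNReal.toReal key
    rw [ENNReal.toReal_add (ENNReal.mul_ne_top ENNReal.ofReal_ne_top hQI_ne) hA_ne,
      ENNReal.toReal_add (ENNReal.mul_ne_top ENNReal.ofReal_ne_top hfin)
        (ENNReal.mul_ne_top ENNReal.ofReal_ne_top hGs_ne),
      ENNReal.toReal_mul, ENNReal.toReal_mul, ENNReal.toReal_mul,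
      ENNReal.toReal_ofReal hβ.le,
      ENNReal.toReal_ofReal (sub_nonneg.mpr (Real.one_le_exp (by positivity)))] at h
    exact h
  have hRHS1 : (∫⁻ y, RV y ∂(P s x)).toReal = Real.exp (β * s) *
      (∫⁻ r in Set.Ioi s, ENNReal.ofReal (β * Real.exp (-β * r)) * PV r x).toReal := by
    rw [hQG s hs, ENNReal.toReal_mul, ENNReal.toReal_ofReal (Real.exp_pos _).le]
  have hRVx : (RV x).toReal =
      (∫⁻ r in Set.Ioc (0:ℝ) s, ENNReal.ofReal (β * Real.exp (-β * r)) * PV r x).toReal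
      + (∫⁻ r in Set.Ioi s, ENNReal.ofReal (β * Real.exp (-β * r)) * PV r x).toReal := by
    rw [hRV_def x, ← Set.Ioc_union_Ioi_eq_Ioi hs, lintegral_union measurableSet_Ioi
      (Set.Ioc_disjoint_Ioi le_rfl), ENNReal.toReal_add hA_ne hGs_ne]
  -- the left-hand side
  have hQintg : Integrable (fun u => (∫⁻ y, RV y ∂(P u x)).toReal)
      (volume.restrict (Set.Ioc (0:ℝ) s)) :=
    integrable_toReal_of_lintegral_ne_top hQm.aemeasurable hQI_ne
  have hpintg : Integrable (fun u => (PV u x).toReal)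
      (volume.restrict (Set.Ioc (0:ℝ) s)) :=
    integrable_toReal_of_lintegral_ne_top hp.aemeasurable hfin
  have hQint_eq : ∫ u in Set.Ioc (0:ℝ) s, (∫⁻ y, RV y ∂(P u x)).toReal
      = (∫⁻ u in Set.Ioc (0:ℝ) s, ∫⁻ y, RV y ∂(P u x)).toReal :=
    integral_toReal hQm.aemeasurable ((ae_restrict_iff' measurableSet_Ioc).2
      (Filter.Eventually.of_forall fun u hu => lt_of_le_of_lt (hQle u hu)
        (ENNReal.mul_lt_top ENNReal.ofReal_lt_top (hRV_fin x))))
  have hpint_eq : ∫ u in Set.Ioc (0:ℝ) s, (PV u x).toReal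
      = (∫⁻ u in Set.Ioc (0:ℝ) s, PV u x).toReal :=
    integral_toReal hp.aemeasurable ((ae_restrict_iff' measurableSet_Ioc).2
      (Filter.Eventually.of_forall fun u hu => hPV_fin u hu.1.le x))
  have hLHS : (∫ u in (0:ℝ)..s, β * ((∫⁻ y, RV y ∂(P u x)).toReal - (PV u x).toReal))
      = β * ((∫⁻ u in Set.Ioc (0:ℝ) s, ∫⁻ y, RV y ∂(P u x)).toReal
          - (∫⁻ u in Set.Ioc (0:ℝ) s, PV u x).toReal) := by
    rw [intervalIntegral.integral_of_le hs, integral_const_mul,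
      integral_sub hQintg hpintg, hQint_eq, hpint_eq]
  rw [hLHS, hRHS1, hRVx]
  linear_combination keyR
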